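/- Let A ⊆ ℝⁿ be a Lebesgue-measurable set of finite Lebesgue measure and let V be a finite-dimensional real vector subspace of L⁰(A). Then there exists ε_c > 0 such that for every measurable set K ⊆ A with ℒⁿ(A \ K) ≤ ε_c, the restriction map V → L⁰(K), v ↦ v|_K, is injective: if v ∈ V vanishes almost everywhere on K, then v vanishes almost everywhere on A. -/

import Mathlib

open MeasureTheory

open Filter Topology Finset in
/-- Step 1 of the proof of Proposition 3.10 (p:complete): if `A ⊆ ℝⁿ` has finite measure
and `V ⊆ L⁰(A)` is a finite-dimensional subspace, then there is `ε_c > 0` such that for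
every measurable `K ⊆ A` with `ℒⁿ(A \ K) ≤ ε_c`, the restriction map to `K` is injective
on `V`: any `v ∈ V` vanishing a.e. on `K` vanishes a.e. on `A`. -/
theorem stmt10 (n : ℕ) (A : Set (EuclideanSpace ℝ (Fin n))) (hA : MeasurableSet A)
    (hAfin : volume A < ⊤)
    (V : Submodule ℝ (EuclideanSpace ℝ (Fin n) →ₘ[volume.restrict A] ℝ))
    (hV : FiniteDimensional ℝ V) :
    ∃ εc : ℝ, 0 < εc ∧
      ∀ K : Set (EuclideanSpace ℝ (Fin n)), MeasurableSet K → K ⊆ A →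
        volume (A \ K) ≤ ENNReal.ofReal εc →
        ∀ v ∈ V, (∀ᵐ x ∂(volume.restrict K), v x = 0) → v = 0 := by
  classical
  by_contra hcon
  push_neg at hcon
  -- Step A: for each k, select a nonzero v ∈ V with small "support" measure
  have hsel : ∀ k : ℕ, ∃ v : EuclideanSpace ℝ (Fin n) →ₘ[volume.restrict A] ℝ, v ∈ V ∧ v ≠ 0 ∧
      (volume.restrict A) {x | v x ≠ 0} ≤ ENNReal.ofReal (1 / (k + 1)) := by
    intro k
    obtain ⟨K, hKm, hKA, hKvol, v, hvV, hvae, hvne⟩ :=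
      hcon (1 / (k + 1)) (by positivity)
    refine ⟨v, hvV, hvne, ?_⟩
    have h1 : (volume.restrict A) {x | v x ≠ 0} = volume ({x | v x ≠ 0} ∩ A) :=
      Measure.restrict_apply' hA
    have h2 : {x | v x ≠ 0} ∩ A ⊆ (A \ K) ∪ ({x | v x ≠ 0} ∩ K) := by
      rintro x ⟨hx1, hx2⟩
      by_cases hxK : x ∈ K
      · exact Or.inr ⟨hx1, hxK⟩
      · exact Or.inl ⟨hx2, hxK⟩
    have h3 : volume ({x | v x ≠ 0} ∩ K) = 0 := by
      have := (ae_iff.mp hvae)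
      rwa [Measure.restrict_apply' hKm] at this
    calc (volume.restrict A) {x | v x ≠ 0} = volume ({x | v x ≠ 0} ∩ A) := h1
      _ ≤ volume ((A \ K) ∪ ({x | v x ≠ 0} ∩ K)) := measure_mono h2
      _ ≤ volume (A \ K) + volume ({x | v x ≠ 0} ∩ K) := measure_union_le _ _
      _ = volume (A \ K) := by rw [h3, add_zero]
      _ ≤ ENNReal.ofReal (1 / (k + 1)) := hKvol
  choose v hvV hvne hvsmall using hsel
  -- coordinates
  have : Module.Finite ℝ V := hV
  set d := Module.finrank ℝ V with hd
  let b : Module.Basis (Fin d) ℝ V := Module.finBasis ℝ V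
  let f : Fin d → EuclideanSpace ℝ (Fin n) → ℝ :=
    fun i => ⇑((b i : V) : _ →ₘ[volume.restrict A] ℝ)
  let G : (Fin d → ℝ) → EuclideanSpace ℝ (Fin n) → ℝ :=
    fun a x => ∑ i, a i * f i x
  -- key: coercion of `b.equivFun.symm a` is a.e. equal to `G a`
  have hkey : ∀ a : Fin d → ℝ,
      ⇑((b.equivFun.symm a : V) : _ →ₘ[volume.restrict A] ℝ) =ᵐ[volume.restrict A] G a := by
    intro a
    have h0 : ((b.equivFun.symm a : V) : _ →ₘ[volume.restrict A] ℝ)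
        = ∑ i, a i • ((b i : V) : _ →ₘ[volume.restrict A] ℝ) := by
      rw [b.equivFun_symm_apply]
      push_cast
      rfl
    rw [h0]
    have : ∀ (s : Finset (Fin d)),
        ⇑(∑ i ∈ s, a i • ((b i : V) : _ →ₘ[volume.restrict A] ℝ)) =ᵐ[volume.restrict A]
          fun x => ∑ i ∈ s, a i * f i x := by
      intro s
      induction s using Finset.induction with
      | empty =>
        simp only [Finset.sum_empty]
        exact AEEqFun.coeFn_zero
      | insert j s hns ih =>
        rw [Finset.sum_insert hns]
        filter_upwards [AEEqFun.coeFn_add (a j • ((b j : V) : _ →ₘ[volume.restrict A] ℝ))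
          (∑ i ∈ s, a i • ((b i : V) : _ →ₘ[volume.restrict A] ℝ)),
          AEEqFun.coeFn_smul (a j) ((b j : V) : _ →ₘ[volume.restrict A] ℝ), ih] with x h1 h2 h3
        rw [Finset.sum_insert hns, h1, Pi.add_apply, h2, Pi.smul_apply, smul_eq_mul, h3]
    exact this Finset.univ
  -- the coordinates of `v k`
  let c : ℕ → Fin d → ℝ := fun k => b.equivFun ⟨v k, hvV k⟩
  have hcne : ∀ k, c k ≠ 0 := by
    intro k hc
    apply hvne k
    have h1 : (⟨v k, hvV k⟩ : V) = 0 := (LinearEquiv.map_eq_zero_iff b.equivFun).mp hc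
    exact congrArg Subtype.val h1
  have hcnorm : ∀ k, ‖c k‖ ≠ 0 := fun k => norm_ne_zero_iff.mpr (hcne k)
  let u : ℕ → Fin d → ℝ := fun k => ‖c k‖⁻¹ • c k
  have hu : ∀ k, u k ∈ Metric.sphere (0 : Fin d → ℝ) 1 := by
    intro k
    simp [u, mem_sphere_iff_norm, norm_smul, abs_of_nonneg (norm_nonneg (c k)),
      inv_mul_cancel₀ (hcnorm k)]
  obtain ⟨a, ha_mem, φ, hφ, hlim⟩ :=
    (isCompact_sphere (0 : Fin d → ℝ) 1).tendsto_subseq hu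
  -- measure of nonvanishing set of G (u k)
  have hGsmall : ∀ k, (volume.restrict A) {x | G (u k) x ≠ 0} ≤ ENNReal.ofReal (1 / (k + 1)) := by
    intro k
    have hGe : {x | G (u k) x ≠ 0} = {x | G (c k) x ≠ 0} := by
      ext x
      simp only [Set.mem_setOf_eq, G, u]
      have h4 : ∑ i, (‖c k‖⁻¹ • c k) i * f i x = ‖c k‖⁻¹ * ∑ i, c k i * f i x := by
        rw [Finset.mul_sum]
        refine Finset.sum_congr rfl fun i _ => ?_
        simp only [Pi.smul_apply, smul_eq_mul]; ring
      rw [h4, mul_ne_zero_iff]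
      constructor
      · exact fun h => h.2
      · exact fun h => ⟨inv_ne_zero (hcnorm k), h⟩
    rw [hGe]
    have hae : ⇑(v k) =ᵐ[volume.restrict A] G (c k) := by
      have h1 : (b.equivFun.symm (c k) : V) = ⟨v k, hvV k⟩ := b.equivFun.symm_apply_apply _
      have h2 := hkey (c k)
      rw [h1] at h2
      exact h2
    have hm : (volume.restrict A) {x | G (c k) x ≠ 0} = (volume.restrict A) {x | v k x ≠ 0} := by
      apply measure_congr
      filter_upwards [hae] with x hx
      show (G (c k) x ≠ 0) = (⇑(v k) x ≠ 0)
      rw [hx]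
    rw [hm]
    exact hvsmall k
  -- pointwise convergence of G (u (φ j)) to G a
  have hptwise : ∀ x, Filter.Tendsto (fun j => G (u (φ j)) x) atTop (nhds (G a x)) := by
    intro x
    have hcont : Continuous fun w : Fin d → ℝ => G w x := by
      apply continuous_finset_sum
      intro i _
      exact (continuous_apply i).mul continuous_const
    exact (hcont.tendsto a).comp hlim
  -- the limit set inclusion
  have hsub : {x | G a x ≠ 0} ⊆ ⋃ m : ℕ, ⋂ j ∈ {j | m ≤ j}, {x | G (u (φ j)) x ≠ 0} := by
    intro x hx
    have h5 : ∀ᶠ j in atTop, G (u (φ j)) x ≠ 0 :=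
      (hptwise x).eventually_ne hx
    obtain ⟨m, hm⟩ := eventually_atTop.mp h5
    exact Set.mem_iUnion.mpr ⟨m, Set.mem_iInter₂.mpr fun j hj => hm j hj⟩
  have hten : Filter.Tendsto (fun j : ℕ => ENNReal.ofReal (1 / (φ j + 1))) atTop (nhds 0) := by
    rw [← ENNReal.ofReal_zero]
    apply ENNReal.tendsto_ofReal
    have h6 : Filter.Tendsto (fun j : ℕ => ((φ j : ℝ) + 1)) atTop atTop :=
      Filter.tendsto_atTop_add_const_right _ 1
        (tendsto_natCast_atTop_atTop.comp hφ.tendsto_atTop)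
    simp only [one_div]
    exact h6.inv_tendsto_atTop
  have hnull : ∀ m : ℕ, (volume.restrict A)
      (⋂ j ∈ {j | m ≤ j}, {x | G (u (φ j)) x ≠ 0}) = 0 := by
    intro m
    refine le_antisymm ?_ zero_le
    refine ge_of_tendsto hten ?_
    refine eventually_atTop.mpr ⟨m, fun j hj => ?_⟩
    exact le_trans (measure_mono (Set.iInter₂_subset j hj)) (hGsmall (φ j))
  have hGa : (volume.restrict A) {x | G a x ≠ 0} = 0 :=
    measure_mono_null hsub (measure_iUnion_null hnull)
  -- conclude
  have hz : ((b.equivFun.symm a : V) : _ →ₘ[volume.restrict A] ℝ) = 0 := by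
    apply AEEqFun.ext
    have hGa' : ∀ᵐ x ∂(volume.restrict A), G a x = 0 := ae_iff.mpr hGa
    filter_upwards [hkey a, AEEqFun.coeFn_zero (β := ℝ), hGa'] with x h1 h2 h3
    rw [h1, h3, h2]
    rfl
  have hV0 : (b.equivFun.symm a : V) = 0 := Subtype.ext hz
  have ha0 : a = 0 := by
    have := congrArg b.equivFun hV0
    rwa [LinearEquiv.apply_symm_apply, map_zero] at this
  rw [ha0] at ha_mem
  simp at ha_mem
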